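/- Gibbs sampler convergence rate: under the Dobrushin uniqueness condition r := max_i ∑_j c_{ij} < 1, for any Lipschitz f on (E^N, d_{L¹}) and any two initial distributions ν₁, ν₂, and any coupling (Z₀(1), Z₀(2)) of (ν₁,ν₂), |ν₁P^k f − ν₂P^k f| ≤ r^k (max_{1≤i≤N} E d(Z₀^i(1), Z₀^i(2))) ∑_{i=1}^N δ_i(f) for all k ≥ 1, where P is the one-sweep Gibbs sampler kernel. -/

import Mathlib

open MeasureTheory

/-- The `L¹`-Wasserstein "distance" associated to a cost `ρ`, defined as the infimum of
`∫ ρ(x,y) dπ` over all couplings `π` of `μ` and `ν`. -/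
noncomputable def W1 {X : Type*} [MeasurableSpace X] (ρ : X → X → ℝ)
    (μ ν : Measure X) : ℝ :=
  ⨅ π : {π : Measure (X × X) //
      IsProbabilityMeasure π ∧ π.map Prod.fst = μ ∧ π.map Prod.snd = ν},
    ∫ p, ρ p.1 p.2 ∂(π : Measure (X × X))

/-- `ρ` is a metric on `X`. -/
def IsDist {X : Type*} (ρ : X → X → ℝ) : Prop :=
  (∀ x, ρ x x = 0) ∧ (∀ x y, 0 ≤ ρ x y) ∧ (∀ x y, ρ x y = ρ y x) ∧
  (∀ x y z, ρ x z ≤ ρ x y + ρ y z) ∧ (∀ x y, ρ x y = 0 → x = y)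

/-- The `L¹` product metric on `E^N`. -/
noncomputable def dL1 {E : Type*} {N : ℕ} (d : E → E → ℝ) (x y : Fin N → E) : ℝ :=
  ∑ i, d (x i) (y i)

/-- One Gibbs-sampler update of coordinate `i`: resample coordinate `i` from the
conditional law `μi i x`, keeping the other coordinates fixed. -/
noncomputable def gstep {E : Type*} [MeasurableSpace E] {N : ℕ}
    (μi : Fin N → (Fin N → E) → Measure E) (i : Fin N) (x : Fin N → E) :
    Measure (Fin N → E) :=
  (μi i x).map (fun t => Function.update x i t)

/-- One full sweep of the Gibbs sampler, updating coordinates `0, 1, …, N-1` in order. -/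
noncomputable def sweep {E : Type*} [MeasurableSpace E] {N : ℕ}
    (μi : Fin N → (Fin N → E) → Measure E) (x : Fin N → E) :
    Measure (Fin N → E) :=
  (List.finRange N).foldl (fun m i => m.bind (gstep μi i)) (Measure.dirac x)

/-- `iterM P k ν` is the law after `k` steps of the Markov kernel `P` started from `ν`. -/
noncomputable def iterM {X : Type*} [MeasurableSpace X] (P : X → Measure X) :
    ℕ → Measure X → Measure X
  | 0, ν => ν
  | (k + 1), ν => (iterM P k ν).bind P

namespace GibbsAux
open scoped ENNReal

variable {α β : Type*} [MeasurableSpace α] [MeasurableSpace β]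

lemma integrable_of_bdd {μ : Measure α} [IsFiniteMeasure μ] {h : α → ℝ}
    (hh : AEStronglyMeasurable h μ) {Mh : ℝ} (hM : ∀ x, |h x| ≤ Mh) : Integrable h μ :=
  Integrable.mono' (integrable_const Mh) hh
    (Filter.Eventually.of_forall fun x => by simpa [Real.norm_eq_abs] using hM x)

lemma isProbabilityMeasure_bind {m : Measure α} [IsProbabilityMeasure m]
    {κ : α → Measure β} (hκ : Measurable κ) (hκp : ∀ x, IsProbabilityMeasure (κ x)) :
    IsProbabilityMeasure (m.bind κ) := by
  constructor
  rw [Measure.bind_apply MeasurableSet.univ hκ.aemeasurable]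
  simp only [measure_univ, lintegral_one]

lemma integral_bind_of_bdd {m : Measure α} [IsProbabilityMeasure m]
    {κ : α → Measure β} (hκ : Measurable κ) (hκp : ∀ x, IsProbabilityMeasure (κ x))
    {h : β → ℝ} (hh : Measurable h) {Mh : ℝ} (hM : ∀ x, |h x| ≤ Mh) :
    ∫ y, h y ∂(m.bind κ) = ∫ x, ∫ y, h y ∂(κ x) ∂m := by
  haveI := isProbabilityMeasure_bind (m := m) hκ hκp
  have hM' : ∀ x, |h x| ≤ |Mh| := fun x => (hM x).trans (le_abs_self _)
  set A : α → ℝ≥0∞ := fun x => ∫⁻ y, ENNReal.ofReal (h y) ∂κ x with hA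
  set B : α → ℝ≥0∞ := fun x => ∫⁻ y, ENNReal.ofReal (-h y) ∂κ x with hB
  have hhp : Measurable fun y => ENNReal.ofReal (h y) := ENNReal.measurable_ofReal.comp hh
  have hhn : Measurable fun y => ENNReal.ofReal (-h y) := ENNReal.measurable_ofReal.comp hh.neg
  have hAmeas : Measurable A := (Measure.measurable_lintegral hhp).comp hκ
  have hBmeas : Measurable B := (Measure.measurable_lintegral hhn).comp hκ
  have hAle : ∀ x, A x ≤ ENNReal.ofReal |Mh| := by
    intro x
    calc A x ≤ ∫⁻ _, ENNReal.ofReal |Mh| ∂κ x := by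
          refine lintegral_mono fun y => ENNReal.ofReal_le_ofReal ?_
          exact (le_abs_self _).trans (hM' y)
      _ = ENNReal.ofReal |Mh| := by simp [(hκp x).measure_univ]
  have hBle : ∀ x, B x ≤ ENNReal.ofReal |Mh| := by
    intro x
    calc B x ≤ ∫⁻ _, ENNReal.ofReal |Mh| ∂κ x := by
          refine lintegral_mono fun y => ENNReal.ofReal_le_ofReal ?_
          exact (neg_le_abs _).trans (hM' y)
      _ = ENNReal.ofReal |Mh| := by simp [(hκp x).measure_univ]
  have hint : ∀ (ν : Measure β) [IsProbabilityMeasure ν], Integrable h ν := by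
    intro ν hν
    exact integrable_of_bdd hh.aestronglyMeasurable hM'
  rw [integral_eq_lintegral_pos_part_sub_lintegral_neg_part (hint _)]
  rw [Measure.lintegral_bind hκ.aemeasurable hhp.aemeasurable,
    Measure.lintegral_bind hκ.aemeasurable hhn.aemeasurable]
  have hpt : ∀ x, ∫ y, h y ∂κ x = (A x).toReal - (B x).toReal := by
    intro x
    haveI := hκp x
    exact integral_eq_lintegral_pos_part_sub_lintegral_neg_part (hint _)
  calc (∫⁻ x, A x ∂m).toReal - (∫⁻ x, B x ∂m).toReal
      = ∫ x, (A x).toReal ∂m - ∫ x, (B x).toReal ∂m := by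
        rw [integral_toReal hAmeas.aemeasurable
            (Filter.Eventually.of_forall fun x => lt_of_le_of_lt (hAle x) ENNReal.ofReal_lt_top),
          integral_toReal hBmeas.aemeasurable
            (Filter.Eventually.of_forall fun x => lt_of_le_of_lt (hBle x) ENNReal.ofReal_lt_top)]
    _ = ∫ x, ((A x).toReal - (B x).toReal) ∂m := by
        rw [← integral_sub]
        · refine integrable_of_bdd (hAmeas.ennreal_toReal.aestronglyMeasurable) (Mh := |Mh|) ?_
          intro x
          rw [abs_of_nonneg ENNReal.toReal_nonneg]
          exact (ENNReal.toReal_le_toReal (lt_of_le_of_lt (hAle x) ENNReal.ofReal_lt_top).ne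
            ENNReal.ofReal_ne_top).2 (hAle x) |>.trans (ENNReal.toReal_ofReal (abs_nonneg Mh)).le
        · refine integrable_of_bdd (hBmeas.ennreal_toReal.aestronglyMeasurable) (Mh := |Mh|) ?_
          intro x
          rw [abs_of_nonneg ENNReal.toReal_nonneg]
          exact (ENNReal.toReal_le_toReal (lt_of_le_of_lt (hBle x) ENNReal.ofReal_lt_top).ne
            ENNReal.ofReal_ne_top).2 (hBle x) |>.trans (ENNReal.toReal_ofReal (abs_nonneg Mh)).le
    _ = ∫ x, ∫ y, h y ∂κ x ∂m := by
        refine integral_congr_ae (Filter.Eventually.of_forall fun x => ?_)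
        simp only [hpt x]

lemma integral_sub_coupling {X : Type*} [MeasurableSpace X]
    {μ ν : Measure X} (π : Measure (X × X)) [IsProbabilityMeasure π]
    (hπ1 : π.map Prod.fst = μ) (hπ2 : π.map Prod.snd = ν)
    {h : X → ℝ} (hh : Measurable h) {Mh : ℝ} (hM : ∀ x, |h x| ≤ Mh) :
    ∫ x, h x ∂μ - ∫ x, h x ∂ν = ∫ p, (h p.1 - h p.2) ∂π := by
  have h1 : ∫ x, h x ∂μ = ∫ p, h p.1 ∂π := by
    rw [← hπ1, integral_map measurable_fst.aemeasurable hh.aestronglyMeasurable]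
  have h2 : ∫ x, h x ∂ν = ∫ p, h p.2 ∂π := by
    rw [← hπ2, integral_map measurable_snd.aemeasurable hh.aestronglyMeasurable]
  rw [h1, h2, ← integral_sub]
  · exact integrable_of_bdd (hh.comp measurable_fst).aestronglyMeasurable fun p => hM p.1
  · exact integrable_of_bdd (hh.comp measurable_snd).aestronglyMeasurable fun p => hM p.2

lemma abs_integral_sub_le_W1 {X : Type*} [MeasurableSpace X] (ρ : X → X → ℝ)
    (hρ0 : ∀ a b, 0 ≤ ρ a b)
    (hρ_meas : Measurable fun p : X × X => ρ p.1 p.2) (x₀ : X)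
    (hρtri : ∀ a b, ρ a b ≤ ρ a x₀ + ρ b x₀)
    (μ ν : Measure X) [IsProbabilityMeasure μ] [IsProbabilityMeasure ν]
    (hμm : Integrable (fun t => ρ t x₀) μ) (hνm : Integrable (fun t => ρ t x₀) ν)
    {h : X → ℝ} (hh : Measurable h) {Mh : ℝ} (hM : ∀ x, |h x| ≤ Mh)
    {L : ℝ} (hL : 0 ≤ L) (hLip : ∀ a b, |h a - h b| ≤ L * ρ a b) :
    |∫ x, h x ∂μ - ∫ x, h x ∂ν| ≤ L * W1 ρ μ ν := by
  have hρx₀ : Measurable fun t : X => ρ t x₀ :=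
    hρ_meas.comp (measurable_id.prodMk measurable_const)
  have key : ∀ π : {π : Measure (X × X) //
      IsProbabilityMeasure π ∧ π.map Prod.fst = μ ∧ π.map Prod.snd = ν},
      |∫ x, h x ∂μ - ∫ x, h x ∂ν| ≤ L * ∫ p, ρ p.1 p.2 ∂(π : Measure (X × X)) := by
    rintro ⟨π, hπp, hπ1, hπ2⟩
    haveI := hπp
    have intρ1 : Integrable (fun p : X × X => ρ p.1 x₀) π := by
      rw [← hπ1] at hμm
      exact ((integrable_map_measure hρx₀.aestronglyMeasurable
        measurable_fst.aemeasurable).1 hμm)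
    have intρ2 : Integrable (fun p : X × X => ρ p.2 x₀) π := by
      rw [← hπ2] at hνm
      exact ((integrable_map_measure hρx₀.aestronglyMeasurable
        measurable_snd.aemeasurable).1 hνm)
    have intρ : Integrable (fun p : X × X => ρ p.1 p.2) π := by
      refine Integrable.mono' (intρ1.add intρ2) hρ_meas.aestronglyMeasurable
        (Filter.Eventually.of_forall fun p => ?_)
      rw [Real.norm_eq_abs, abs_of_nonneg (hρ0 _ _)]
      exact hρtri _ _
    have intsub : Integrable (fun p : X × X => h p.1 - h p.2) π :=
      (integrable_of_bdd (hh.comp measurable_fst).aestronglyMeasurable fun p => hM p.1).sub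
        (integrable_of_bdd (hh.comp measurable_snd).aestronglyMeasurable fun p => hM p.2)
    calc |∫ x, h x ∂μ - ∫ x, h x ∂ν| = |∫ p, (h p.1 - h p.2) ∂π| := by
          rw [integral_sub_coupling π hπ1 hπ2 hh hM]
      _ ≤ ∫ p, |h p.1 - h p.2| ∂π := by
          simpa [Real.norm_eq_abs] using norm_integral_le_integral_norm
            (fun p : X × X => h p.1 - h p.2) (μ := π)
      _ ≤ ∫ p, L * ρ p.1 p.2 ∂π :=
          integral_mono intsub.abs (intρ.const_mul L) fun p => hLip _ _
      _ = L * ∫ p, ρ p.1 p.2 ∂π := integral_const_mul L _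
  haveI : Nonempty {π : Measure (X × X) //
      IsProbabilityMeasure π ∧ π.map Prod.fst = μ ∧ π.map Prod.snd = ν} := by
    refine ⟨⟨μ.prod ν, inferInstance, ?_, ?_⟩⟩
    · simp [Measure.map_fst_prod, measure_univ]
    · simp [Measure.map_snd_prod, measure_univ]
  rw [W1, Real.mul_iInf_of_nonneg hL]
  exact le_ciInf key

section Gibbs

variable {E : Type*} [MeasurableSpace E] {N : ℕ}

/-- Single-site update operator on functions. -/
noncomputable def Tstep (μi : Fin N → (Fin N → E) → Measure E) (i : Fin N)
    (g : (Fin N → E) → ℝ) (x : Fin N → E) : ℝ :=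
  ∫ t, g (Function.update x i t) ∂(μi i x)

/-- Iterated update operator along a list of sites. -/
noncomputable def Tfold (μi : Fin N → (Fin N → E) → Measure E) (l : List (Fin N))
    (g : (Fin N → E) → ℝ) : (Fin N → E) → ℝ :=
  l.foldr (fun i h => Tstep μi i h) g

lemma measurable_update_pair (i : Fin N) :
    Measurable fun p : (Fin N → E) × E => Function.update p.1 i p.2 := by
  apply measurable_pi_lambda
  intro j
  simp only [Function.update_apply]
  by_cases hj : j = i
  · simpa [hj] using measurable_snd
  · simp only [hj, ↓reduceIte]
    exact (measurable_pi_apply j).comp measurable_fst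

/-- The kernel associated to the conditional laws at site `i`. -/
noncomputable def ker (μi : Fin N → (Fin N → E) → Measure E)
    (hm : ∀ i, Measurable (μi i)) (i : Fin N) :
    ProbabilityTheory.Kernel (Fin N → E) E := ⟨μi i, hm i⟩

lemma measurable_gstep (μi : Fin N → (Fin N → E) → Measure E)
    (hm : ∀ i, Measurable (μi i)) (hp : ∀ i x, IsProbabilityMeasure (μi i x)) (i : Fin N) :
    Measurable (gstep μi i) := by
  haveI : ProbabilityTheory.IsMarkovKernel (ker μi hm i) := ⟨fun x => hp i x⟩
  apply Measure.measurable_of_measurable_coe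
  intro s hs
  have hsets : MeasurableSet ((fun p : (Fin N → E) × E => Function.update p.1 i p.2) ⁻¹' s) :=
    (measurable_update_pair i) hs
  have : (fun x => gstep μi i x s) = fun x => (ker μi hm i) x
      (Prod.mk x ⁻¹' ((fun p : (Fin N → E) × E => Function.update p.1 i p.2) ⁻¹' s)) := by
    funext x
    rw [gstep, Measure.map_apply (measurable_update x) hs]
    rfl
  rw [this]
  exact ProbabilityTheory.Kernel.measurable_kernel_prodMk_left hsets

lemma isProbabilityMeasure_gstep (μi : Fin N → (Fin N → E) → Measure E)
    (hp : ∀ i x, IsProbabilityMeasure (μi i x)) (i : Fin N) (x : Fin N → E) :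
    IsProbabilityMeasure (gstep μi i x) := by
  haveI := hp i x
  exact Measure.isProbabilityMeasure_map (measurable_update x).aemeasurable

lemma Tstep_meas (μi : Fin N → (Fin N → E) → Measure E)
    (hm : ∀ i, Measurable (μi i)) (hp : ∀ i x, IsProbabilityMeasure (μi i x)) (i : Fin N)
    {g : (Fin N → E) → ℝ} (hg : Measurable g) :
    Measurable (Tstep μi i g) := by
  haveI : ProbabilityTheory.IsMarkovKernel (ker μi hm i) := ⟨fun x => hp i x⟩
  have : Tstep μi i g = fun x => ∫ t,
      (fun p : (Fin N → E) × E => g (Function.update p.1 i p.2)) (x, t) ∂(ker μi hm i) x := rfl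
  rw [this]
  exact (MeasureTheory.StronglyMeasurable.integral_kernel_prod_right'
    ((hg.comp (measurable_update_pair i)).stronglyMeasurable)).measurable

lemma Tstep_bdd (μi : Fin N → (Fin N → E) → Measure E)
    (hp : ∀ i x, IsProbabilityMeasure (μi i x)) (i : Fin N)
    {g : (Fin N → E) → ℝ} {Mg : ℝ} (hMg : ∀ x, |g x| ≤ Mg) (x : Fin N → E) :
    |Tstep μi i g x| ≤ Mg := by
  haveI := hp i x
  have := norm_integral_le_of_norm_le_const (μ := μi i x)
    (f := fun t => g (Function.update x i t)) (C := Mg)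
    (Filter.Eventually.of_forall fun t => by simpa [Real.norm_eq_abs] using hMg _)
  simpa [Tstep, Real.norm_eq_abs, measure_univ] using this

/-- Coordinatewise Lipschitz coefficients. -/
def Coef (d : E → E → ℝ) (g : (Fin N → E) → ℝ) (ε : Fin N → ℝ) : Prop :=
  (∀ i, 0 ≤ ε i) ∧ ∀ i : Fin N, ∀ x y : Fin N → E, (∀ j, j ≠ i → x j = y j) →
    |g x - g y| ≤ ε i * d (x i) (y i)

lemma Tstep_coef (d : E → E → ℝ) (hd : IsDist d)
    (hd_meas : Measurable fun p : E × E => d p.1 p.2)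
    (μi : Fin N → (Fin N → E) → Measure E)
    (hprob : ∀ i x, IsProbabilityMeasure (μi i x))
    (x₀ : E) (hmom : ∀ i x, Integrable (fun t => d t x₀) (μi i x))
    (c : Fin N → Fin N → ℝ) (hc0 : ∀ i j, 0 ≤ c i j)
    (hc : ∀ i j : Fin N, ∀ x y : Fin N → E, (∀ l, l ≠ j → x l = y l) →
      W1 d (μi i x) (μi i y) ≤ c i j * d (x j) (y j))
    (i : Fin N) {g : (Fin N → E) → ℝ} (hg : Measurable g) {Mg : ℝ} (hMg : ∀ x, |g x| ≤ Mg)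
    {ε : Fin N → ℝ} (hε : Coef d g ε) :
    Coef d (Tstep μi i g) (fun j => (if j = i then 0 else ε j) + c i j * ε i) := by
  obtain ⟨hd_refl, hd_nonneg, hd_symm, hd_tri, -⟩ := hd
  have hρtri : ∀ a b : E, d a b ≤ d a x₀ + d b x₀ := fun a b => by
    calc d a b ≤ d a x₀ + d x₀ b := hd_tri a x₀ b
      _ = d a x₀ + d b x₀ := by rw [hd_symm x₀ b]
  constructor
  · intro j
    have h1 : (0:ℝ) ≤ if j = i then 0 else ε j := by
      by_cases hji : j = i <;> simp [hji, hε.1 j]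
    exact add_nonneg h1 (mul_nonneg (hc0 i j) (hε.1 i))
  intro j x y hxy
  haveI := hprob i x
  haveI := hprob i y
  by_cases hji : j = i
  · subst hji
    -- x and y differ only at j = i, so the updated configurations agree
    have hupd : ∀ t, Function.update x j t = Function.update y j t := by
      intro t
      funext l
      by_cases hl : l = j
      · subst hl; rw [Function.update_self, Function.update_self]
      · rw [Function.update_of_ne hl, Function.update_of_ne hl, hxy l hl]
    have hLip : ∀ a b : E, |g (Function.update x j a) - g (Function.update x j b)| ≤
        ε j * d a b := by
      intro a b
      have := hε.2 j (Function.update x j a) (Function.update x j b) (fun l hl => by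
        rw [Function.update_of_ne hl, Function.update_of_ne hl])
      simpa using this
    have key := abs_integral_sub_le_W1 d hd_nonneg hd_meas x₀ hρtri (μi j x) (μi j y)
      (hmom j x) (hmom j y) (h := fun t => g (Function.update x j t))
      (hg.comp (measurable_update x)) (fun t => hMg _)
      (hε.1 j) hLip
    have : |Tstep μi j g x - Tstep μi j g y| ≤ ε j * W1 d (μi j x) (μi j y) := by
      have hTy : Tstep μi j g y = ∫ t, g (Function.update x j t) ∂(μi j y) := by
        unfold Tstep
        exact integral_congr_ae (Filter.Eventually.of_forall fun t => by
          show g (Function.update y j t) = g (Function.update x j t)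
          rw [hupd t])
      rw [Tstep, hTy]
      exact key
    calc |Tstep μi j g x - Tstep μi j g y| ≤ ε j * W1 d (μi j x) (μi j y) := this
      _ ≤ ε j * (c j j * d (x j) (y j)) :=
          mul_le_mul_of_nonneg_left (hc j j x y hxy) (hε.1 j)
      _ = ((if j = j then 0 else ε j) + c j j * ε j) * d (x j) (y j) := by
          simp; ring
  · -- x and y differ only at j ≠ i
    have hupdxj : ∀ t, Function.update x i t j = x j := fun t => Function.update_of_ne hji t x
    have hupdyj : ∀ t, Function.update y i t j = y j := fun t => Function.update_of_ne hji t y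
    have key1 : |(∫ t, g (Function.update x i t) ∂(μi i x)) -
        ∫ t, g (Function.update y i t) ∂(μi i x)| ≤ ε j * d (x j) (y j) := by
      rw [← integral_sub
        (integrable_of_bdd (h := fun t => g (Function.update x i t))
          (hg.comp (measurable_update x)).aestronglyMeasurable fun t => hMg _)
        (integrable_of_bdd (h := fun t => g (Function.update y i t))
          (hg.comp (measurable_update y)).aestronglyMeasurable fun t => hMg _)]
      have := norm_integral_le_of_norm_le_const (μ := μi i x)
        (f := fun t => g (Function.update x i t) - g (Function.update y i t))
        (C := ε j * d (x j) (y j))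
        (Filter.Eventually.of_forall fun t => by
          have hdiff : ∀ l, l ≠ j → Function.update x i t l = Function.update y i t l := by
            intro l hl
            by_cases hli : l = i
            · subst hli; rw [Function.update_self, Function.update_self]
            · rw [Function.update_of_ne hli, Function.update_of_ne hli, hxy l hl]
          have := hε.2 j (Function.update x i t) (Function.update y i t) hdiff
          rw [hupdxj t, hupdyj t] at this
          simpa [Real.norm_eq_abs] using this)
      simpa [Real.norm_eq_abs, measure_univ] using this
    have key2 : |(∫ t, g (Function.update y i t) ∂(μi i x)) -
        ∫ t, g (Function.update y i t) ∂(μi i y)| ≤ ε i * (c i j * d (x j) (y j)) := by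
      have hLip : ∀ a b : E, |g (Function.update y i a) - g (Function.update y i b)| ≤
          ε i * d a b := by
        intro a b
        have := hε.2 i (Function.update y i a) (Function.update y i b) (fun l hl => by
          rw [Function.update_of_ne hl, Function.update_of_ne hl])
        simpa using this
      have key := abs_integral_sub_le_W1 d hd_nonneg hd_meas x₀ hρtri (μi i x) (μi i y)
        (hmom i x) (hmom i y) (h := fun t => g (Function.update y i t))
        (hg.comp (measurable_update y)) (fun t => hMg _)
        (hε.1 i) hLip
      exact key.trans (mul_le_mul_of_nonneg_left (hc i j x y hxy) (hε.1 i))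
    calc |Tstep μi i g x - Tstep μi i g y|
        ≤ |(∫ t, g (Function.update x i t) ∂(μi i x)) -
            ∫ t, g (Function.update y i t) ∂(μi i x)| +
          |(∫ t, g (Function.update y i t) ∂(μi i x)) -
            ∫ t, g (Function.update y i t) ∂(μi i y)| := abs_sub_le _ _ _
      _ ≤ ε j * d (x j) (y j) + ε i * (c i j * d (x j) (y j)) := add_le_add key1 key2
      _ = ((if j = i then 0 else ε j) + c i j * ε i) * d (x j) (y j) := by
          simp [hji]; ring

/-- The action of one site update on coefficient vectors. -/
def Amap (c : Fin N → Fin N → ℝ) (i : Fin N) (ε : Fin N → ℝ) : Fin N → ℝ :=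
  fun j => (if j = i then 0 else ε j) + c i j * ε i

lemma Tfold_meas_bdd (μi : Fin N → (Fin N → E) → Measure E)
    (hm : ∀ i, Measurable (μi i)) (hp : ∀ i x, IsProbabilityMeasure (μi i x))
    (l : List (Fin N)) {g : (Fin N → E) → ℝ} (hg : Measurable g)
    {Mg : ℝ} (hMg : ∀ x, |g x| ≤ Mg) :
    Measurable (Tfold μi l g) ∧ ∀ x, |Tfold μi l g x| ≤ Mg := by
  induction l with
  | nil => exact ⟨hg, hMg⟩
  | cons i l ih =>
    obtain ⟨h1, h2⟩ := ih
    exact ⟨Tstep_meas μi hm hp i h1, fun x => Tstep_bdd μi hp i h2 x⟩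

lemma Tfold_coef (d : E → E → ℝ) (hd : IsDist d)
    (hd_meas : Measurable fun p : E × E => d p.1 p.2)
    (μi : Fin N → (Fin N → E) → Measure E)
    (hprob : ∀ i x, IsProbabilityMeasure (μi i x)) (hm : ∀ i, Measurable (μi i))
    (x₀ : E) (hmom : ∀ i x, Integrable (fun t => d t x₀) (μi i x))
    (c : Fin N → Fin N → ℝ) (hc0 : ∀ i j, 0 ≤ c i j)
    (hc : ∀ i j : Fin N, ∀ x y : Fin N → E, (∀ l, l ≠ j → x l = y l) →
      W1 d (μi i x) (μi i y) ≤ c i j * d (x j) (y j))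
    (l : List (Fin N)) {g : (Fin N → E) → ℝ} (hg : Measurable g)
    {Mg : ℝ} (hMg : ∀ x, |g x| ≤ Mg) {ε : Fin N → ℝ} (hε : Coef d g ε) :
    Coef d (Tfold μi l g) (l.foldr (Amap c) ε) := by
  induction l with
  | nil => exact hε
  | cons i l ih =>
    obtain ⟨h1, h2⟩ := Tfold_meas_bdd μi hm hprob l hg hMg
    exact Tstep_coef d hd hd_meas μi hprob x₀ hmom c hc0 hc i h1 h2 ih

lemma foldr_Amap_nonneg (c : Fin N → Fin N → ℝ) (hc0 : ∀ i j, 0 ≤ c i j)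
    (l : List (Fin N)) {ε : Fin N → ℝ} (hε : ∀ i, 0 ≤ ε i) :
    ∀ j, 0 ≤ (l.foldr (Amap c) ε) j := by
  induction l with
  | nil => exact hε
  | cons i l ih =>
    intro j
    refine add_nonneg ?_ (mul_nonneg (hc0 i j) (ih i))
    by_cases h : j = i <;> simp [h, ih j]

lemma foldr_Amap_notmem (c : Fin N → Fin N → ℝ) (hc0 : ∀ i j, 0 ≤ c i j)
    (l : List (Fin N)) {ε : Fin N → ℝ} (hε : ∀ i, 0 ≤ ε i) {j : Fin N} (hj : j ∉ l) :
    ε j ≤ (l.foldr (Amap c) ε) j := by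
  induction l with
  | nil => exact le_rfl
  | cons i l ih =>
    have hji : j ≠ i := fun h => hj (h ▸ List.mem_cons_self)
    have hjl : j ∉ l := fun h => hj (List.mem_cons_of_mem i h)
    calc ε j ≤ (l.foldr (Amap c) ε) j := ih hjl
      _ ≤ (if j = i then 0 else (l.foldr (Amap c) ε) j) + c i j * (l.foldr (Amap c) ε) i := by
          rw [if_neg hji]
          exact le_add_of_nonneg_right (mul_nonneg (hc0 i j) (foldr_Amap_nonneg c hc0 l hε i))
      _ = ((i :: l).foldr (Amap c) ε) j := rfl

lemma foldr_Amap_sum (c : Fin N → Fin N → ℝ) (hc0 : ∀ i j, 0 ≤ c i j)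
    (r : ℝ) (hr : ∀ i, ∑ j, c i j ≤ r) (hr1 : r ≤ 1)
    (l : List (Fin N)) (hl : l.Nodup) {ε : Fin N → ℝ} (hε : ∀ i, 0 ≤ ε i) :
    ∑ j, (l.foldr (Amap c) ε) j ≤ ∑ j, (if j ∈ l then r * ε j else ε j) := by
  induction l with
  | nil => simp
  | cons i l ih =>
    obtain ⟨hil, hnd⟩ := List.nodup_cons.1 hl
    set η := l.foldr (Amap c) ε with hη
    have hη0 : ∀ j, 0 ≤ η j := foldr_Amap_nonneg c hc0 l hε
    have step1 : ∑ j, ((i :: l).foldr (Amap c) ε) j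
        = (∑ j, (if j = i then 0 else η j)) + (∑ j, c i j) * η i := by
      show ∑ j, Amap c i η j = _
      simp only [Amap]
      rw [Finset.sum_add_distrib, Finset.sum_mul]
    have step2 : ∑ j, (if j = i then 0 else η j) = (∑ j, η j) - η i := by
      have h1 : ∀ j : Fin N, (if j = i then 0 else η j)
          = η j - (if j = i then η j else 0) := by intro j; split <;> ring
      simp only [h1]
      rw [Finset.sum_sub_distrib, Finset.sum_ite_eq' Finset.univ i η]
      simp
    have step3 : ∑ j, ((i :: l).foldr (Amap c) ε) j ≤ (∑ j, η j) + (r - 1) * ε i := by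
      rw [step1, step2]
      have h2 : (∑ j, c i j) * η i ≤ r * η i :=
        mul_le_mul_of_nonneg_right (hr i) (hη0 i)
      have h3 : (r - 1) * η i ≤ (r - 1) * ε i :=
        mul_le_mul_of_nonpos_left (foldr_Amap_notmem c hc0 l hε hil) (by linarith)
      nlinarith [hη0 i, hε i]
    have step4 : ∑ j, (if j ∈ i :: l then r * ε j else ε j)
        = (∑ j, (if j ∈ l then r * ε j else ε j)) + (r - 1) * ε i := by
      have h4 : ∀ j : Fin N, (if j ∈ i :: l then r * ε j else ε j)
          = (if j ∈ l then r * ε j else ε j) + (if j = i then (r - 1) * ε i else 0) := by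
        intro j
        by_cases hjl : j ∈ l
        · have hji : j ≠ i := fun h => hil (h ▸ hjl)
          simp [hjl, List.mem_cons, hji]
        · by_cases hji : j = i
          · subst hji
            simp [hjl, List.mem_cons]
            ring
          · simp [hjl, List.mem_cons, hji]
      simp only [h4]
      rw [Finset.sum_add_distrib, Finset.sum_ite_eq' Finset.univ i (fun _ => (r - 1) * ε i)]
      simp
    rw [step4]
    exact step3.trans (add_le_add (ih hnd) le_rfl)

lemma foldl_bind_prob (μi : Fin N → (Fin N → E) → Measure E)
    (hm : ∀ i, Measurable (μi i)) (hp : ∀ i x, IsProbabilityMeasure (μi i x)) :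
    ∀ (l : List (Fin N)) (m : Measure (Fin N → E)), IsProbabilityMeasure m →
      IsProbabilityMeasure (l.foldl (fun m i => m.bind (gstep μi i)) m) := by
  intro l
  induction l with
  | nil => exact fun m hm' => hm'
  | cons i l ih =>
    intro m hm'
    rw [List.foldl_cons]
    haveI := hm'
    exact ih _ (isProbabilityMeasure_bind (measurable_gstep μi hm hp i)
      (isProbabilityMeasure_gstep μi hp i))

lemma measurable_foldl_bind (μi : Fin N → (Fin N → E) → Measure E)
    (hm : ∀ i, Measurable (μi i)) (hp : ∀ i x, IsProbabilityMeasure (μi i x)) :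
    ∀ (l : List (Fin N)) (m : (Fin N → E) → Measure (Fin N → E)), Measurable m →
      Measurable (fun x => l.foldl (fun m i => m.bind (gstep μi i)) (m x)) := by
  intro l
  induction l with
  | nil => exact fun m hmm => hmm
  | cons i l ih =>
    intro m hmm
    simp only [List.foldl_cons]
    exact ih _ ((Measure.measurable_bind' (measurable_gstep μi hm hp i)).comp hmm)

lemma measurable_sweep (μi : Fin N → (Fin N → E) → Measure E)
    (hm : ∀ i, Measurable (μi i)) (hp : ∀ i x, IsProbabilityMeasure (μi i x)) :
    Measurable (sweep μi) :=
  measurable_foldl_bind μi hm hp (List.finRange N) _ Measure.measurable_dirac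

lemma isProbabilityMeasure_sweep (μi : Fin N → (Fin N → E) → Measure E)
    (hm : ∀ i, Measurable (μi i)) (hp : ∀ i x, IsProbabilityMeasure (μi i x)) (x : Fin N → E) :
    IsProbabilityMeasure (sweep μi x) :=
  foldl_bind_prob μi hm hp (List.finRange N) _ inferInstance

lemma integral_foldl_bind (μi : Fin N → (Fin N → E) → Measure E)
    (hm : ∀ i, Measurable (μi i)) (hp : ∀ i x, IsProbabilityMeasure (μi i x)) :
    ∀ (l : List (Fin N)) (m : Measure (Fin N → E)), IsProbabilityMeasure m →
      ∀ {g : (Fin N → E) → ℝ}, Measurable g → ∀ {Mg : ℝ}, (∀ x, |g x| ≤ Mg) →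
      ∫ y, g y ∂(l.foldl (fun m i => m.bind (gstep μi i)) m) = ∫ x, Tfold μi l g x ∂m := by
  intro l
  induction l with
  | nil => intro m _ g _ Mg _; rfl
  | cons i l ih =>
    intro m hm' g hg Mg hMg
    haveI := hm'
    haveI : IsProbabilityMeasure (m.bind (gstep μi i)) :=
      isProbabilityMeasure_bind (measurable_gstep μi hm hp i) (isProbabilityMeasure_gstep μi hp i)
    rw [List.foldl_cons, ih _ this hg hMg]
    obtain ⟨hTm, hTb⟩ := Tfold_meas_bdd μi hm hp l hg hMg
    rw [integral_bind_of_bdd (m := m) (measurable_gstep μi hm hp i)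
      (isProbabilityMeasure_gstep μi hp i) hTm hTb]
    refine integral_congr_ae (Filter.Eventually.of_forall fun x => ?_)
    show ∫ y, Tfold μi l g y ∂(gstep μi i x) = Tfold μi (i :: l) g x
    rw [gstep, integral_map (measurable_update x).aemeasurable hTm.aestronglyMeasurable]
    rfl

lemma integral_sweep (μi : Fin N → (Fin N → E) → Measure E)
    (hm : ∀ i, Measurable (μi i)) (hp : ∀ i x, IsProbabilityMeasure (μi i x))
    {g : (Fin N → E) → ℝ} (hg : Measurable g) {Mg : ℝ} (hMg : ∀ x, |g x| ≤ Mg)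
    (x : Fin N → E) :
    ∫ y, g y ∂(sweep μi x) = Tfold μi (List.finRange N) g x := by
  rw [sweep, integral_foldl_bind μi hm hp (List.finRange N) _ inferInstance hg hMg]
  exact integral_dirac' _ x
    ((Tfold_meas_bdd μi hm hp (List.finRange N) hg hMg).1.stronglyMeasurable)

lemma iterM_prob (μi : Fin N → (Fin N → E) → Measure E)
    (hm : ∀ i, Measurable (μi i)) (hp : ∀ i x, IsProbabilityMeasure (μi i x))
    (ν : Measure (Fin N → E)) [IsProbabilityMeasure ν] :
    ∀ k, IsProbabilityMeasure (iterM (sweep μi) k ν) := by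
  intro k
  induction k with
  | zero => exact ‹IsProbabilityMeasure ν›
  | succ k ih =>
    haveI := ih
    exact isProbabilityMeasure_bind (measurable_sweep μi hm hp)
      (isProbabilityMeasure_sweep μi hm hp)

lemma integral_iterM (μi : Fin N → (Fin N → E) → Measure E)
    (hm : ∀ i, Measurable (μi i)) (hp : ∀ i x, IsProbabilityMeasure (μi i x)) :
    ∀ (k : ℕ) (ν : Measure (Fin N → E)), IsProbabilityMeasure ν →
      ∀ {g : (Fin N → E) → ℝ}, Measurable g → ∀ {Mg : ℝ}, (∀ x, |g x| ≤ Mg) →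
      ∫ y, g y ∂(iterM (sweep μi) k ν)
        = ∫ x, ((fun h => Tfold μi (List.finRange N) h)^[k] g) x ∂ν := by
  intro k
  induction k with
  | zero => intro ν _ g _ Mg _; rfl
  | succ k ih =>
    intro ν hν g hg Mg hMg
    haveI := hν
    haveI := iterM_prob μi hm hp ν k
    show ∫ y, g y ∂((iterM (sweep μi) k ν).bind (sweep μi)) = _
    rw [integral_bind_of_bdd (measurable_sweep μi hm hp)
      (isProbabilityMeasure_sweep μi hm hp) hg hMg]
    have hpt : ∀ x, ∫ y, g y ∂(sweep μi x) = Tfold μi (List.finRange N) g x :=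
      integral_sweep μi hm hp hg hMg
    rw [integral_congr_ae (Filter.Eventually.of_forall fun x => hpt x)]
    obtain ⟨hTm, hTb⟩ := Tfold_meas_bdd μi hm hp (List.finRange N) hg hMg
    rw [ih _ inferInstance hTm hTb, Function.iterate_succ_apply]

lemma coef_telescope (d : E → E → ℝ) (hd : IsDist d)
    {g : (Fin N → E) → ℝ} {ε : Fin N → ℝ} (hε : Coef d g ε) (x y : Fin N → E) :
    |g x - g y| ≤ ∑ i, ε i * d (x i) (y i) := by
  suffices H : ∀ s : Finset (Fin N), ∀ x y : Fin N → E, (∀ j, j ∉ s → x j = y j) →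
      |g x - g y| ≤ ∑ i ∈ s, ε i * d (x i) (y i) by
    exact H Finset.univ x y (fun j hj => absurd (Finset.mem_univ j) hj)
  intro s
  induction s using Finset.induction_on with
  | empty =>
    intro x y h
    have hxy : x = y := funext fun j => h j (Finset.notMem_empty j)
    simp [hxy]
  | insert a s ha ih =>
    intro x y h
    set z := Function.update y a (x a) with hz
    have h1 : |g x - g z| ≤ ∑ i ∈ s, ε i * d (x i) (z i) := by
      refine ih x z fun j hj => ?_
      by_cases hja : j = a
      · subst hja; simp [hz]
      · rw [hz, Function.update_of_ne hja]
        exact h j (by simp [hja, hj])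
    have h2 : |g z - g y| ≤ ε a * d (z a) (y a) :=
      hε.2 a z y (fun j hj => Function.update_of_ne hj _ _)
    have hza : z a = x a := Function.update_self a (x a) y
    have hzi : ∀ i, i ∈ s → z i = y i := fun i hi =>
      Function.update_of_ne (by rintro rfl; exact ha hi) _ _
    calc |g x - g y| ≤ |g x - g z| + |g z - g y| := abs_sub_le _ _ _
      _ ≤ (∑ i ∈ s, ε i * d (x i) (z i)) + ε a * d (z a) (y a) := add_le_add h1 h2
      _ = (∑ i ∈ s, ε i * d (x i) (y i)) + ε a * d (x a) (y a) := by
          rw [hza]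
          congr 1
          exact Finset.sum_congr rfl fun i hi => by rw [hzi i hi]
      _ = ∑ i ∈ insert a s, ε i * d (x i) (y i) := by
          rw [Finset.sum_insert ha]
          ring

end Gibbs

end GibbsAux

/-- (Gibbs sampler convergence rate, Theorem 2.3(a)). Under the Dobrushin
uniqueness condition `r = ‖C‖_∞ < 1`, for any Lipschitz `f` with coordinatewise
Lipschitz coefficients `δ i`, any two initial distributions `ν₁, ν₂` and any coupling
`π` of `(ν₁, ν₂)`,
`|ν₁P^k f − ν₂P^k f| ≤ r^k (max_i E d(Z₀ⁱ(1), Z₀ⁱ(2))) ∑_i δ_i(f)` for all `k ≥ 1`. -/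
theorem gibbs_sampler_convergence_rate
    {E : Type*} [MeasurableSpace E] [TopologicalSpace E] [PolishSpace E] [BorelSpace E]
    {N : ℕ} (d : E → E → ℝ) (hd : IsDist d)
    (hd_lsc : LowerSemicontinuous (fun p : E × E => d p.1 p.2))
    (hd_meas : Measurable (fun p : E × E => d p.1 p.2))
    (μi : Fin N → (Fin N → E) → Measure E)
    (hprob : ∀ i x, IsProbabilityMeasure (μi i x))
    (hμ_meas : ∀ i, Measurable (μi i))
    (x₀ : E) (hmom : ∀ i x, Integrable (fun t => d t x₀) (μi i x))
    (c : Fin N → Fin N → ℝ) (hc0 : ∀ i j, 0 ≤ c i j)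
    (hc : ∀ i j : Fin N, ∀ x y : Fin N → E, (∀ l, l ≠ j → x l = y l) →
      W1 d (μi i x) (μi i y) ≤ c i j * d (x j) (y j))
    (r : ℝ) (hr : ∀ i, ∑ j, c i j ≤ r) (hr0 : 0 ≤ r) (hr1 : r < 1)
    (f : (Fin N → E) → ℝ) (hf_meas : Measurable f) (M : ℝ) (hf_bdd : ∀ x, |f x| ≤ M)
    (δ : Fin N → ℝ) (hδ0 : ∀ i, 0 ≤ δ i)
    (hδ : ∀ i : Fin N, ∀ x y : Fin N → E, (∀ j, j ≠ i → x j = y j) →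
      |f x - f y| ≤ δ i * d (x i) (y i))
    (ν₁ ν₂ : Measure (Fin N → E))
    (hν₁ : IsProbabilityMeasure ν₁) (hν₂ : IsProbabilityMeasure ν₂)
    (π : Measure ((Fin N → E) × (Fin N → E))) (hπ : IsProbabilityMeasure π)
    (hπ₁ : π.map Prod.fst = ν₁) (hπ₂ : π.map Prod.snd = ν₂)
    (hdint : ∀ i : Fin N,
      Integrable (fun p : (Fin N → E) × (Fin N → E) => d (p.1 i) (p.2 i)) π) :
    ∀ k : ℕ, 1 ≤ k →
      |(∫ y, f y ∂(iterM (sweep μi) k ν₁)) - ∫ y, f y ∂(iterM (sweep μi) k ν₂)| ≤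
        r ^ k * (⨆ i : Fin N, ∫ p, d (p.1 i) (p.2 i) ∂π) * ∑ i, δ i := by
  classical
  intro k _
  haveI := hν₁; haveI := hν₂; haveI := hπ
  set P : ((Fin N → E) → ℝ) → ((Fin N → E) → ℝ) :=
    fun h => GibbsAux.Tfold μi (List.finRange N) h with hP
  have main : ∀ k : ℕ, (Measurable (P^[k] f) ∧ ∀ x, |(P^[k] f) x| ≤ M) ∧
      ∃ ε : Fin N → ℝ, GibbsAux.Coef d (P^[k] f) ε ∧ ∑ i, ε i ≤ r ^ k * ∑ i, δ i := by
    intro k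
    induction k with
    | zero => exact ⟨⟨hf_meas, hf_bdd⟩, δ, ⟨hδ0, hδ⟩, by simp⟩
    | succ k ih =>
      obtain ⟨⟨hm1, hb1⟩, ε, hcoef, hsum⟩ := ih
      have hnext := GibbsAux.Tfold_coef d hd hd_meas μi hprob hμ_meas x₀ hmom c hc0 hc
        (List.finRange N) hm1 hb1 hcoef
      have hmb := GibbsAux.Tfold_meas_bdd μi hμ_meas hprob (List.finRange N) hm1 hb1
      refine ⟨by rw [Function.iterate_succ_apply']; exact hmb,
        (List.finRange N).foldr (GibbsAux.Amap c) ε,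
        by rw [Function.iterate_succ_apply']; exact hnext, ?_⟩
      have hstep := GibbsAux.foldr_Amap_sum c hc0 r hr hr1.le (List.finRange N)
        (List.nodup_finRange N) hcoef.1
      calc ∑ j, ((List.finRange N).foldr (GibbsAux.Amap c) ε) j
          ≤ ∑ j, (if j ∈ List.finRange N then r * ε j else ε j) := hstep
        _ = r * ∑ j, ε j := by simp [List.mem_finRange, Finset.mul_sum]
        _ ≤ r * (r ^ k * ∑ i, δ i) := mul_le_mul_of_nonneg_left hsum hr0
        _ = r ^ (k + 1) * ∑ i, δ i := by ring
  obtain ⟨⟨hgm, hgb⟩, ε, hcoef, hsum⟩ := main k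
  have h1 : ∫ y, f y ∂(iterM (sweep μi) k ν₁) = ∫ x, (P^[k] f) x ∂ν₁ :=
    GibbsAux.integral_iterM μi hμ_meas hprob k ν₁ hν₁ hf_meas hf_bdd
  have h2 : ∫ y, f y ∂(iterM (sweep μi) k ν₂) = ∫ x, (P^[k] f) x ∂ν₂ :=
    GibbsAux.integral_iterM μi hμ_meas hprob k ν₂ hν₂ hf_meas hf_bdd
  rw [h1, h2]
  have hsub : ∫ x, (P^[k] f) x ∂ν₁ - ∫ x, (P^[k] f) x ∂ν₂
      = ∫ p, ((P^[k] f) p.1 - (P^[k] f) p.2) ∂π :=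
    GibbsAux.integral_sub_coupling π hπ₁ hπ₂ hgm hgb
  have hA0 : 0 ≤ ⨆ i : Fin N, ∫ p, d (p.1 i) (p.2 i) ∂π :=
    Real.iSup_nonneg fun i => integral_nonneg fun p => hd.2.1 _ _
  have hAle : ∀ i : Fin N, ∫ p, d (p.1 i) (p.2 i) ∂π ≤ ⨆ i : Fin N, ∫ p, d (p.1 i) (p.2 i) ∂π :=
    fun i => le_ciSup (f := fun i : Fin N => ∫ p, d (p.1 i) (p.2 i) ∂π)
      (Set.Finite.bddAbove (Set.finite_range _)) i
  have hint : Integrable (fun p : (Fin N → E) × (Fin N → E) =>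
      ∑ i, ε i * d (p.1 i) (p.2 i)) π :=
    integrable_finset_sum _ (fun i _ => (hdint i).const_mul (ε i))
  have intsub : Integrable (fun p : (Fin N → E) × (Fin N → E) =>
      (P^[k] f) p.1 - (P^[k] f) p.2) π := by
    refine GibbsAux.integrable_of_bdd (Mh := M + M)
      ((hgm.comp measurable_fst).sub (hgm.comp measurable_snd)).aestronglyMeasurable fun p => ?_
    have h5 : |(P^[k] f) p.1 - (P^[k] f) p.2| ≤ |(P^[k] f) p.1| + |(P^[k] f) p.2| := by
      have := abs_add_le ((P^[k] f) p.1) (-(P^[k] f) p.2)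
      rw [abs_neg] at this
      simpa [sub_eq_add_neg] using this
    exact h5.trans (add_le_add (hgb _) (hgb _))
  calc |∫ x, (P^[k] f) x ∂ν₁ - ∫ x, (P^[k] f) x ∂ν₂|
      = |∫ p, ((P^[k] f) p.1 - (P^[k] f) p.2) ∂π| := by rw [hsub]
    _ ≤ ∫ p, |(P^[k] f) p.1 - (P^[k] f) p.2| ∂π := by
        simpa [Real.norm_eq_abs] using norm_integral_le_integral_norm
          (fun p : (Fin N → E) × (Fin N → E) => (P^[k] f) p.1 - (P^[k] f) p.2) (μ := π)
    _ ≤ ∫ p, ∑ i, ε i * d (p.1 i) (p.2 i) ∂π :=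
        integral_mono intsub.abs hint (fun p => GibbsAux.coef_telescope d hd hcoef _ _)
    _ = ∑ i, ε i * ∫ p, d (p.1 i) (p.2 i) ∂π := by
        rw [integral_finset_sum _ (fun i _ => (hdint i).const_mul (ε i))]
        exact Finset.sum_congr rfl fun i _ => integral_const_mul (ε i) _
    _ ≤ ∑ i, ε i * ⨆ i : Fin N, ∫ p, d (p.1 i) (p.2 i) ∂π :=
        Finset.sum_le_sum fun i _ => mul_le_mul_of_nonneg_left (hAle i) (hcoef.1 i)
    _ = (∑ i, ε i) * ⨆ i : Fin N, ∫ p, d (p.1 i) (p.2 i) ∂π := by rw [Finset.sum_mul]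
    _ ≤ (r ^ k * ∑ i, δ i) * ⨆ i : Fin N, ∫ p, d (p.1 i) (p.2 i) ∂π :=
        mul_le_mul_of_nonneg_right hsum hA0
    _ = r ^ k * (⨆ i : Fin N, ∫ p, d (p.1 i) (p.2 i) ∂π) * ∑ i, δ i := by ring
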